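/- For p₀ ∈ (0,1) and γ ∈ (0,1), the normal distortion function w_{p₀,γ} is concave on (0, p*] and convex on [p*, 1), where p* = Φ(γΦ⁻¹(p₀)/(1+γ)). -/

import Mathlib

open Real MeasureTheory ProbabilityTheory Set Filter

/-- Standard normal CDF. -/
noncomputable def Phi (x : ℝ) : ℝ :=
  ∫ t in Set.Iic x, Real.exp (-t ^ 2 / 2) / Real.sqrt (2 * Real.pi)

/-- Standard normal quantile function (inverse of `Phi`). -/
noncomputable def PhiInv : ℝ → ℝ := Function.invFun Phi

/-- Standard normal density. -/
noncomputable def ndens (x : ℝ) : ℝ :=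
  Real.exp (-x ^ 2 / 2) / Real.sqrt (2 * Real.pi)

lemma ndens_pos (x : ℝ) : 0 < ndens x :=
  div_pos (Real.exp_pos _) (Real.sqrt_pos.2 (by positivity))

lemma ndens_cont : Continuous ndens := by
  unfold ndens
  fun_prop

lemma ndens_integrable : Integrable ndens := by
  have h : Integrable (fun x : ℝ => Real.exp (-(1/2) * x ^ 2)) := integrable_exp_neg_mul_sq (by norm_num)
  have := h.div_const (Real.sqrt (2 * Real.pi))
  refine this.congr (Filter.Eventually.of_forall fun x => ?_)
  unfold ndens
  ring_nf

lemma integral_ndens : ∫ x, ndens x = 1 := by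
  have h := integral_gaussian (1/2 : ℝ)
  have : ∫ x, ndens x = (∫ x : ℝ, Real.exp (-(1/2) * x ^ 2)) / Real.sqrt (2 * Real.pi) := by
    rw [← integral_div]
    congr 1 with x
    unfold ndens
    ring_nf
  rw [this, h]
  rw [show (Real.pi / (1/2 : ℝ)) = 2 * Real.pi by ring]
  rw [div_self (by positivity)]

lemma Phi_hasDerivAt (x : ℝ) : HasDerivAt Phi (ndens x) x := by
  have key : Phi = fun y => Phi 0 + ∫ t in (0:ℝ)..y, ndens t := by
    funext y
    rw [← intervalIntegral.integral_Iic_sub_Iic ndens_integrable.integrableOn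
      ndens_integrable.integrableOn]
    show Phi y = Phi 0 + (Phi y - Phi 0)
    ring
  have h : HasDerivAt (fun y => ∫ t in (0:ℝ)..y, ndens t) (ndens x) x :=
    intervalIntegral.integral_hasDerivAt_right (ndens_integrable.intervalIntegrable)
      (ndens_cont.stronglyMeasurableAtFilter _ _) ndens_cont.continuousAt
  rw [key]
  exact h.const_add (Phi 0)

lemma Phi_strictMono : StrictMono Phi :=
  strictMono_of_hasDerivAt_pos (fun x => Phi_hasDerivAt x) (fun x => ndens_pos x)

lemma Phi_continuous : Continuous Phi :=
  continuous_iff_continuousAt.2 fun x => (Phi_hasDerivAt x).continuousAt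

lemma Phi_tendsto_atTop : Tendsto Phi atTop (nhds 1) := by
  have h := (MeasureTheory.aecover_Iic (tendsto_id : Tendsto (id : ℝ → ℝ) atTop atTop)
    (μ := (volume : Measure ℝ))).integral_tendsto_of_countably_generated ndens_integrable
  rw [integral_ndens] at h
  exact h

lemma Phi_tendsto_atBot : Tendsto Phi atBot (nhds 0) := by
  have key : ∀ x : ℝ, Phi x = 1 - ∫ t in Set.Ioi x, ndens t := by
    intro x
    have := intervalIntegral.integral_Iic_add_Ioi (b := x)
      (ndens_integrable.integrableOn (s := Iic x)) (ndens_integrable.integrableOn (s := Ioi x))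
    rw [integral_ndens] at this
    show Phi x = 1 - (∫ t in Set.Ioi x, ndens t)
    have hPhi : Phi x = ∫ t in Set.Iic x, ndens t := rfl
    linarith [this, hPhi]
  have h := (MeasureTheory.aecover_Ioi (tendsto_id : Tendsto (id : ℝ → ℝ) atBot atBot)
    (μ := (volume : Measure ℝ))).integral_tendsto_of_countably_generated ndens_integrable
  rw [integral_ndens] at h
  have : Tendsto (fun x : ℝ => 1 - ∫ t in Set.Ioi x, ndens t) atBot (nhds (1 - 1)) :=
    (tendsto_const_nhds.sub h)
  simpa [key, funext key] using this

lemma Phi_mem_Ioo (x : ℝ) : Phi x ∈ Set.Ioo (0:ℝ) 1 := by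
  constructor
  · have h : (0:ℝ) ≤ Phi (x - 1) := by
      have := le_of_tendsto Phi_tendsto_atBot
        (eventually_atBot.2 ⟨x - 1, fun y hy => (Phi_strictMono.monotone hy : Phi y ≤ Phi (x-1))⟩)
      linarith
    linarith [Phi_strictMono (show x - 1 < x by linarith)]
  · have h : Phi (x + 1) ≤ 1 := by
      have := ge_of_tendsto Phi_tendsto_atTop
        (eventually_atTop.2 ⟨x + 1, fun y hy => (Phi_strictMono.monotone hy : Phi (x+1) ≤ Phi y)⟩)
      linarith
    linarith [Phi_strictMono (show x < x + 1 by linarith)]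

lemma Phi_surj {p : ℝ} (hp : p ∈ Set.Ioo (0:ℝ) 1) : ∃ x, Phi x = p := by
  obtain ⟨a, ha⟩ : ∃ a, Phi a < p := by
    have := Phi_tendsto_atBot.eventually_lt_const hp.1
    exact this.exists
  obtain ⟨b, hb⟩ : ∃ b, p < Phi b := by
    have := Phi_tendsto_atTop.eventually_const_lt hp.2
    exact this.exists
  have hab : a ≤ b := (Phi_strictMono.lt_iff_lt.1 (ha.trans hb)).le
  have := intermediate_value_Icc hab (Phi_continuous.continuousOn)
  obtain ⟨x, _, hx⟩ := this ⟨ha.le, hb.le⟩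
  exact ⟨x, hx⟩

lemma PhiInv_Phi (x : ℝ) : PhiInv (Phi x) = x :=
  Function.leftInverse_invFun Phi_strictMono.injective x

lemma Phi_PhiInv {p : ℝ} (hp : p ∈ Set.Ioo (0:ℝ) 1) : Phi (PhiInv p) = p := by
  obtain ⟨x, hx⟩ := Phi_surj hp
  exact Function.invFun_eq ⟨x, hx⟩

lemma PhiInv_strictMonoOn : StrictMonoOn PhiInv (Set.Ioo (0:ℝ) 1) := by
  intro p hp q hq hpq
  have := Phi_strictMono.lt_iff_lt (a := PhiInv p) (b := PhiInv q)
  rw [Phi_PhiInv hp, Phi_PhiInv hq] at this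
  exact this.1 hpq

lemma deriv_ratio (γ c x : ℝ) :
    ndens (γ*x+c) * (γ * (ndens x)⁻¹) = γ * Real.exp ((x^2 - (γ*x+c)^2)/2) := by
  unfold ndens
  have hs : Real.sqrt (2 * Real.pi) ≠ 0 := by positivity
  have hx : Real.exp (-x^2/2) ≠ 0 := Real.exp_ne_zero _
  field_simp
  have h : Real.exp ((x^2-(γ*x+c)^2)/2) * Real.exp (-x^2/2) = Real.exp (-(γ*x+c)^2/2) := by
    rw [← Real.exp_add]; congr 1; ring
  simp only [neg_div] at h ⊢
  linear_combination (-γ) * h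

lemma q_mono {γ x₀ a b : ℝ} (hγ : 0 < γ) (hγ1 : γ < 1) (ha : γ*x₀/(1+γ) ≤ a) (hab : a ≤ b) :
    (a^2 - (γ*a+(1-γ)*x₀)^2)/2 ≤ (b^2 - (γ*b+(1-γ)*x₀)^2)/2 := by
  have h1 : (0:ℝ) < 1+γ := by linarith
  have ha' : γ*x₀ ≤ a*(1+γ) := by
    have := (div_le_iff₀ h1).1 ha
    linarith
  have hb' : γ*x₀ ≤ b*(1+γ) := le_trans ha' (by nlinarith)
  have key : 0 ≤ (b-a)*((1-γ)*((a*(1+γ)-γ*x₀)+(b*(1+γ)-γ*x₀))) :=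
    mul_nonneg (by linarith) (mul_nonneg (by linarith) (by linarith))
  nlinarith [key]

lemma q_anti {γ x₀ a b : ℝ} (hγ : 0 < γ) (hγ1 : γ < 1) (hb : b ≤ γ*x₀/(1+γ)) (hab : a ≤ b) :
    (b^2 - (γ*b+(1-γ)*x₀)^2)/2 ≤ (a^2 - (γ*a+(1-γ)*x₀)^2)/2 := by
  have h1 : (0:ℝ) < 1+γ := by linarith
  have hb' : b*(1+γ) ≤ γ*x₀ := by
    have := (le_div_iff₀ h1).1 hb
    linarith
  have ha' : a*(1+γ) ≤ γ*x₀ := le_trans (by nlinarith) hb'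
  have key : 0 ≤ (b-a)*((1-γ)*((γ*x₀-a*(1+γ))+(γ*x₀-b*(1+γ)))) :=
    mul_nonneg (by linarith) (mul_nonneg (by linarith) (by linarith))
  nlinarith [key]

lemma PhiInv_continuousAt {p : ℝ} (hp : p ∈ Set.Ioo (0:ℝ) 1) : ContinuousAt PhiInv p := by
  have himg : PhiInv '' (Set.Ioo (0:ℝ) 1) = Set.univ := by
    apply Set.eq_univ_of_forall
    intro x
    exact ⟨Phi x, Phi_mem_Ioo x, PhiInv_Phi x⟩
  exact PhiInv_strictMonoOn.continuousAt_of_image_mem_nhds (isOpen_Ioo.mem_nhds hp)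
    (by rw [himg]; exact Filter.univ_mem)

lemma PhiInv_hasDerivAt {p : ℝ} (hp : p ∈ Set.Ioo (0:ℝ) 1) :
    HasDerivAt PhiInv (ndens (PhiInv p))⁻¹ p :=
  HasDerivAt.of_local_left_inverse (PhiInv_continuousAt hp) (Phi_hasDerivAt _)
    (ndens_pos _).ne' ((isOpen_Ioo.eventually_mem hp).mono fun q hq => Phi_PhiInv hq)

/-- Normal distortion function. -/
noncomputable def wdist (p₀ γ p : ℝ) : ℝ :=
  Phi (γ * PhiInv p + (1 - γ) * PhiInv p₀)

lemma wdist_hasDerivAt (p₀ γ : ℝ) {p : ℝ} (hp : p ∈ Set.Ioo (0:ℝ) 1) :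
    HasDerivAt (wdist p₀ γ)
      (γ * Real.exp (((PhiInv p)^2 - (γ * PhiInv p + (1-γ) * PhiInv p₀)^2)/2)) p := by
  have hinner : HasDerivAt (fun q => γ * PhiInv q + (1 - γ) * PhiInv p₀)
      (γ * (ndens (PhiInv p))⁻¹) p :=
    ((PhiInv_hasDerivAt hp).const_mul γ).add_const _
  have h := (Phi_hasDerivAt (γ * PhiInv p + (1 - γ) * PhiInv p₀)).comp p hinner
  have := deriv_ratio γ ((1-γ) * PhiInv p₀) (PhiInv p)
  rw [this] at h
  exact h

theorem stmt4 (p₀ γ : ℝ) (hp₀ : p₀ ∈ Set.Ioo (0:ℝ) 1) (hγ : γ ∈ Set.Ioo (0:ℝ) 1) :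
    ConcaveOn ℝ (Set.Ioc 0 (Phi (γ * PhiInv p₀ / (1 + γ)))) (wdist p₀ γ) ∧
    ConvexOn ℝ (Set.Ico (Phi (γ * PhiInv p₀ / (1 + γ))) 1) (wdist p₀ γ) := by
  obtain ⟨hg0, hg1⟩ := hγ
  set x₀ := PhiInv p₀ with hx₀
  set xs := γ * x₀ / (1 + γ) with hxs
  set ps := Phi xs with hps
  have hpsIoo : ps ∈ Set.Ioo (0:ℝ) 1 := Phi_mem_Ioo xs
  have hInvPs : PhiInv ps = xs := PhiInv_Phi xs
  have hderiv : ∀ p ∈ Set.Ioo (0:ℝ) 1, deriv (wdist p₀ γ) p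
      = γ * Real.exp (((PhiInv p)^2 - (γ * PhiInv p + (1-γ) * x₀)^2)/2) :=
    fun p hp => (wdist_hasDerivAt p₀ γ hp).deriv
  have hconts : ∀ s : Set ℝ, s ⊆ Set.Ioo 0 1 → ContinuousOn (wdist p₀ γ) s := by
    intro s hs p hp
    exact ((wdist_hasDerivAt p₀ γ (hs hp)).continuousAt).continuousWithinAt
  have hmono := PhiInv_strictMonoOn.monotoneOn
  constructor
  · have hsub : Set.Ioc (0:ℝ) ps ⊆ Set.Ioo 0 1 := fun q hq => ⟨hq.1, lt_of_le_of_lt hq.2 hpsIoo.2⟩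
    apply AntitoneOn.concaveOn_of_deriv (convex_Ioc _ _) (hconts _ hsub)
    · rw [interior_Ioc]
      intro q hq
      exact ((wdist_hasDerivAt p₀ γ ⟨hq.1, hq.2.trans hpsIoo.2⟩).differentiableAt).differentiableWithinAt
    · rw [interior_Ioc]
      intro a ha b hb hab
      have haI : a ∈ Set.Ioo (0:ℝ) 1 := ⟨ha.1, ha.2.trans hpsIoo.2⟩
      have hbI : b ∈ Set.Ioo (0:ℝ) 1 := ⟨hb.1, hb.2.trans hpsIoo.2⟩
      rw [hderiv a haI, hderiv b hbI]
      have h1 : PhiInv a ≤ PhiInv b := hmono haI hbI hab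
      have h2 : PhiInv b ≤ xs := by
        rw [← hInvPs]; exact hmono hbI hpsIoo hb.2.le
      exact mul_le_mul_of_nonneg_left (Real.exp_le_exp.2 (q_anti hg0 hg1 h2 h1)) hg0.le
  · have hsub : Set.Ico ps (1:ℝ) ⊆ Set.Ioo 0 1 := fun q hq => ⟨lt_of_lt_of_le hpsIoo.1 hq.1, hq.2⟩
    apply MonotoneOn.convexOn_of_deriv (convex_Ico _ _) (hconts _ hsub)
    · rw [interior_Ico]
      intro q hq
      exact ((wdist_hasDerivAt p₀ γ ⟨hpsIoo.1.trans hq.1, hq.2⟩).differentiableAt).differentiableWithinAt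
    · rw [interior_Ico]
      intro a ha b hb hab
      have haI : a ∈ Set.Ioo (0:ℝ) 1 := ⟨hpsIoo.1.trans ha.1, ha.2⟩
      have hbI : b ∈ Set.Ioo (0:ℝ) 1 := ⟨hpsIoo.1.trans hb.1, hb.2⟩
      rw [hderiv a haI, hderiv b hbI]
      have h1 : PhiInv a ≤ PhiInv b := hmono haI hbI hab
      have h2 : xs ≤ PhiInv a := by
        rw [← hInvPs]; exact hmono hpsIoo haI ha.1.le
      exact mul_le_mul_of_nonneg_left (Real.exp_le_exp.2 (q_mono hg0 hg1 h2 h1)) hg0.le
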